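/- Fix m ∈ ℝ and d > 0, and let f be the Cauchy probability density f(y) = 1 / ( π d (1 + ((y−m)/d)²) ). Then for all real y and n: f(y+n) ≥ f(y) if and only if n² ≤ 2n(m − y). (NEM Condition for Cauchy Mixture Models.) -/

import Mathlib

/-- **NEM Condition for Cauchy Mixture Models.**
For the Cauchy density `f` with location `m` and dispersion `d > 0`,
additive noise `n` increases the density at `y`, `f(y+n) ≥ f(y)`, exactly when
the quadratic NEM condition `n² ≤ 2n(m − y)` holds. -/
theorem cmm_nem_condition (m d : ℝ) (hd : 0 < d) (f : ℝ → ℝ)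
    (hf : ∀ y, f y = 1 / (Real.pi * d * (1 + ((y - m) / d) ^ 2))) :
    ∀ y n : ℝ, f (y + n) ≥ f y ↔ n ^ 2 ≤ 2 * n * (m - y) := by
  intro y n
  have hpi := Real.pi_pos
  have hpd : 0 < Real.pi * d := mul_pos hpi hd
  have hd2 : (0:ℝ) < d ^ 2 := by positivity
  have hpos : ∀ z : ℝ, 0 < Real.pi * d * (1 + ((z - m) / d) ^ 2) := by
    intro z
    have h1 : 0 < 1 + ((z - m) / d) ^ 2 := by positivity
    positivity
  rw [hf, hf, ge_iff_le, one_div_le_one_div (hpos y) (hpos (y+n)), mul_le_mul_iff_right₀ hpd,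
    add_le_add_iff_left, div_pow, div_pow, div_le_div_iff₀ hd2 hd2]
  constructor
  · intro h; nlinarith
  · intro h; nlinarith
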